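/- Let n ≥ q ≥ 1 be integers, let v ∈ ℝⁿ have all entries positive, let X ∈ F_v, let X⊥ be an n×(n−q) real matrix such that (X X⊥) is orthogonal, and set ṽ = v/‖v‖₂. Let (e_1,…,e_q) be the canonical basis of ℝ^q and (ẽ_1,…,ẽ_{n−q}) the canonical basis of ℝ^{n−q}. Then the family consisting of the matrices X e_i e_iᵀ for 1 ≤ i ≤ q, the matrices (1/√2) X (e_i e_jᵀ + e_j e_iᵀ) for 1 ≤ i < j ≤ q, and the matrices X⊥ ẽ_i ṽᵀ X for 1 ≤ i ≤ n−q, is an orthonormal family in ℝ^{n×q} with respect to the Frobenius inner product, is contained in N_X, and its linear span equals N_X; i.e., it is an orthonormal basis of N_X. -/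

import Mathlib

open Matrix

/-- Index type for the basis of the normal space: `q` indices for `X e_i e_iᵀ`, pairs
`i < j` for `(1/√2) X (e_i e_jᵀ + e_j e_iᵀ)`, and `n − q` indices for `X⊥ ẽ_i ṽᵀ X`. -/
abbrev BasisIdx (n q : ℕ) :=
  Fin q ⊕ {p : Fin q × Fin q // p.1 < p.2} ⊕ Fin (n - q)

/-- The family of matrices: `X e_i e_iᵀ` (`1 ≤ i ≤ q`),
`(1/√2) X (e_i e_jᵀ + e_j e_iᵀ)` (`1 ≤ i < j ≤ q`), and `X⊥ ẽ_i ṽᵀ X` (`1 ≤ i ≤ n − q`),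
where `ṽ = v / ‖v‖₂`. -/
noncomputable def basisFam (n q : ℕ) (v : Fin n → ℝ) (X : Matrix (Fin n) (Fin q) ℝ)
    (Xp : Matrix (Fin n) (Fin (n - q)) ℝ) :
    BasisIdx n q → Matrix (Fin n) (Fin q) ℝ
  | Sum.inl i => X * Matrix.single i i (1 : ℝ)
  | Sum.inr (Sum.inl p) => (Real.sqrt 2)⁻¹ •
      (X * (Matrix.single p.1.1 p.1.2 (1 : ℝ) + Matrix.single p.1.2 p.1.1 (1 : ℝ)))
  | Sum.inr (Sum.inr i) =>
      vecMulVec (fun r => Xp r i) (((Real.sqrt (∑ k, v k ^ 2))⁻¹ • v) ᵥ* X)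

/-- The above family is an orthonormal family with respect to the Frobenius
inner product, is contained in `N_X = {XS + X⊥ u vᵀ X : Sᵀ = S, u ∈ ℝ^{n−q}}`, and its linear
span equals `N_X`; i.e., it is an orthonormal basis of `N_X`. -/
lemma frob_trace {m p : Type*} [Fintype m] [Fintype p] (M N : Matrix m p ℝ) :
    Matrix.trace (Mᵀ * N) = ∑ s, ∑ r, M r s * N r s := by
  simp [Matrix.trace, Matrix.diag, Matrix.mul_apply]

lemma trace_std {q : ℕ} (a b c d : Fin q) :
    Matrix.trace ((Matrix.single a b (1:ℝ))ᵀ * Matrix.single c d 1) =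
      if a = c ∧ b = d then 1 else 0 := by
  rw [frob_trace]
  simp [Matrix.single, ite_and, Finset.sum_ite_eq, Finset.sum_ite_eq']

lemma trace_vmv {m p : Type*} [Fintype m] [Fintype p] (a a' : m → ℝ) (b b' : p → ℝ) :
    Matrix.trace ((vecMulVec a b)ᵀ * vecMulVec a' b') = (a ⬝ᵥ a') * (b ⬝ᵥ b') := by
  rw [frob_trace]
  simp only [vecMulVec_apply, dotProduct]
  rw [Finset.sum_mul_sum, Finset.sum_comm]
  exact Finset.sum_congr rfl fun s _ => Finset.sum_congr rfl fun r _ => by ring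

lemma transpose_std {q : ℕ} (a b : Fin q) :
    (Matrix.single a b (1:ℝ))ᵀ = Matrix.single b a 1 := by
  ext r s
  simp [Matrix.single, and_comm]

lemma trace_smul_smul {m p : Type*} [Fintype m] [Fintype p] (r s : ℝ) (A B : Matrix m p ℝ) :
    Matrix.trace ((r • A)ᵀ * (s • B)) = r * s * Matrix.trace (Aᵀ * B) := by
  rw [transpose_smul, Matrix.smul_mul, Matrix.mul_smul, trace_smul, trace_smul,
    smul_eq_mul, smul_eq_mul]
  ring

lemma vmv_add_left {m p : Type*} (w1 w2 : m → ℝ) (b : p → ℝ) :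
    vecMulVec (w1 + w2) b = vecMulVec w1 b + vecMulVec w2 b := by
  ext r s; simp [vecMulVec_apply, add_mul]

lemma vmv_smul_left {m p : Type*} (a : ℝ) (w : m → ℝ) (b : p → ℝ) :
    vecMulVec (a • w) b = a • vecMulVec w b := by
  ext r s; simp [vecMulVec_apply, mul_assoc]

theorem stmt_11 (n q : ℕ) (hq : 1 ≤ q) (hnq : q ≤ n)
    (v : Fin n → ℝ) (hv : ∀ i, 0 < v i)
    (X : Matrix (Fin n) (Fin q) ℝ)
    (hX : Xᵀ * X = 1 ∧ ∃ c : Fin q → ℝ, X *ᵥ c = v)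
    (Xp : Matrix (Fin n) (Fin (n - q)) ℝ)
    (hO : (fromCols X Xp)ᵀ * fromCols X Xp = 1)
    (Nset : Set (Matrix (Fin n) (Fin q) ℝ))
    (hN : Nset = {U | ∃ (S : Matrix (Fin q) (Fin q) ℝ) (u : Fin (n - q) → ℝ),
      Sᵀ = S ∧ U = X * S + vecMulVec (Xp *ᵥ u) (v ᵥ* X)}) :
    (∀ k l : BasisIdx n q,
      Matrix.trace ((basisFam n q v X Xp k)ᵀ * basisFam n q v X Xp l) =
        if k = l then 1 else 0) ∧
    (∀ k : BasisIdx n q, basisFam n q v X Xp k ∈ Nset) ∧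
    (Submodule.span ℝ (Set.range (basisFam n q v X Xp)) :
      Set (Matrix (Fin n) (Fin q) ℝ)) = Nset := by
  subst hN
  obtain ⟨hX1, c0, hc0⟩ := hX
  -- block orthogonality facts
  rw [transpose_fromCols, fromRows_mul_fromCols, ← fromBlocks_one] at hO
  rw [fromBlocks_inj] at hO
  obtain ⟨-, hXtXp, hXptX, hXptXp⟩ := hO
  -- basic facts about v and c
  set c : Fin q → ℝ := v ᵥ* X with hcdef
  have hc : c = c0 := by
    rw [hcdef, ← hc0, ← mulVec_transpose, mulVec_mulVec, hX1, one_mulVec]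
  have hXc : X *ᵥ c = v := by rw [hc, hc0]
  set nv : ℝ := Real.sqrt (∑ k, v k ^ 2) with hnvdef
  have hsum_pos : 0 < ∑ k, v k ^ 2 := by
    have : Nonempty (Fin n) := ⟨⟨0, lt_of_lt_of_le hq hnq⟩⟩
    exact Finset.sum_pos (fun i _ => pow_pos (hv i) 2) Finset.univ_nonempty
  have hnv_pos : 0 < nv := Real.sqrt_pos.2 hsum_pos
  have hnv_ne : nv ≠ 0 := ne_of_gt hnv_pos
  have hnv_sq : nv * nv = ∑ k, v k ^ 2 := Real.mul_self_sqrt hsum_pos.le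
  have hvv : v ⬝ᵥ v = ∑ k, v k ^ 2 := by simp [dotProduct, sq]
  have hcc : c ⬝ᵥ c = nv * nv := by
    rw [hnv_sq, ← hvv, ← hXc, dotProduct_mulVec, hXc, ← hcdef]
  have h2 : Real.sqrt 2 * Real.sqrt 2 = 2 := Real.mul_self_sqrt (by norm_num)
  have h2ne : Real.sqrt 2 ≠ 0 := by positivity
  set F := basisFam n q v X Xp with hF
  -- entrywise orthogonality facts
  have hXtXp' : ∀ (j : Fin q) (i : Fin (n - q)), ∑ r, X r j * Xp r i = 0 := by
    intro j i
    have := congrFun (congrFun hXtXp j) i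
    simpa [mul_apply] using this
  have hXptXp' : ∀ i j : Fin (n - q),
      (fun r => Xp r i) ⬝ᵥ (fun r => Xp r j) = if i = j then 1 else 0 := by
    intro i j
    have := congrFun (congrFun hXptXp i) j
    simpa [mul_apply, dotProduct, one_apply, transpose_apply] using this
  -- the normalized second factor
  have hb : ((nv⁻¹ • v) ᵥ* X) = nv⁻¹ • c := by rw [smul_vecMul, hcdef]
  have hbb : (nv⁻¹ • c) ⬝ᵥ (nv⁻¹ • c) = 1 := by
    simp only [dotProduct, Pi.smul_apply, smul_eq_mul]
    have : ∀ k, nv⁻¹ * c k * (nv⁻¹ * c k) = nv⁻¹ * nv⁻¹ * (c k * c k) := fun k => by ring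
    rw [Finset.sum_congr rfl fun k _ => this k, ← Finset.mul_sum]
    have : ∑ k, c k * c k = nv * nv := hcc
    rw [this]
    field_simp
  have key : ∀ M N : Matrix (Fin q) (Fin q) ℝ,
      Matrix.trace ((X * M)ᵀ * (X * N)) = Matrix.trace (Mᵀ * N) := by
    intro M N
    rw [transpose_mul, Matrix.mul_assoc, ← Matrix.mul_assoc Xᵀ X N, hX1, Matrix.one_mul]
  have hXperp : ∀ (i : Fin (n - q)) (b : Fin q → ℝ),
      Xᵀ * vecMulVec (fun r => Xp r i) b = 0 := by
    intro i b
    ext j s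
    simp only [mul_apply, transpose_apply, vecMulVec_apply, Matrix.zero_apply]
    have : ∀ r, X r j * (Xp r i * b s) = X r j * Xp r i * b s := fun r => by ring
    rw [Finset.sum_congr rfl fun r _ => this r, ← Finset.sum_mul, hXtXp', zero_mul]
  have hperp : ∀ (M : Matrix (Fin q) (Fin q) ℝ) (i : Fin (n - q)) (b : Fin q → ℝ),
      Matrix.trace ((X * M)ᵀ * vecMulVec (fun r => Xp r i) b) = 0 := by
    intro M i b
    rw [transpose_mul, Matrix.mul_assoc, hXperp, Matrix.mul_zero, trace_zero]
  have tsymm : ∀ A B : Matrix (Fin n) (Fin q) ℝ,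
      Matrix.trace (Aᵀ * B) = Matrix.trace (Bᵀ * A) := by
    intro A B
    rw [← trace_transpose (Bᵀ * A), transpose_mul, transpose_transpose]
  -- orthonormality by cases
  have e11 : ∀ i j : Fin q, Matrix.trace ((F (Sum.inl i))ᵀ * F (Sum.inl j)) =
      if i = j then 1 else 0 := by
    intro i j
    show Matrix.trace ((X * Matrix.single i i 1)ᵀ * (X * Matrix.single j j 1)) = _
    rw [key, trace_std]
    simp [and_self]
  have e12 : ∀ (i : Fin q) (p : {p : Fin q × Fin q // p.1 < p.2}),
      Matrix.trace ((F (Sum.inl i))ᵀ * F (Sum.inr (Sum.inl p))) = 0 := by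
    rintro i ⟨⟨a, b⟩, hab⟩
    show Matrix.trace ((X * Matrix.single i i 1)ᵀ *
      ((Real.sqrt 2)⁻¹ • (X * (Matrix.single a b 1 + Matrix.single b a 1)))) = 0
    rw [Matrix.mul_smul, trace_smul, Matrix.mul_add, Matrix.mul_add, trace_add, key, key,
      trace_std, trace_std]
    rw [if_neg (fun h => (ne_of_lt hab) (h.1.symm.trans h.2)),
      if_neg (fun h => (ne_of_lt hab) (h.2.symm.trans h.1))]
    simp
  have e13 : ∀ (i : Fin q) (j : Fin (n - q)),
      Matrix.trace ((F (Sum.inl i))ᵀ * F (Sum.inr (Sum.inr j))) = 0 := by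
    intro i j
    exact hperp _ j _
  have e22 : ∀ p p' : {p : Fin q × Fin q // p.1 < p.2},
      Matrix.trace ((F (Sum.inr (Sum.inl p)))ᵀ * F (Sum.inr (Sum.inl p'))) =
        if p = p' then 1 else 0 := by
    rintro ⟨⟨a, b⟩, hab⟩ ⟨⟨a', b'⟩, hab'⟩
    show Matrix.trace
      (((Real.sqrt 2)⁻¹ • (X * (Matrix.single a b 1 + Matrix.single b a 1)))ᵀ *
       ((Real.sqrt 2)⁻¹ • (X * (Matrix.single a' b' 1 + Matrix.single b' a' 1)))) = _
    rw [trace_smul_smul, key, transpose_add, Matrix.add_mul, Matrix.mul_add, Matrix.mul_add,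
      trace_add, trace_add, trace_add, trace_std, trace_std, trace_std, trace_std]
    simp only [Subtype.mk.injEq, Prod.mk.injEq]
    by_cases h : a = a' ∧ b = b'
    · obtain ⟨rfl, rfl⟩ := h
      have hne : a ≠ b := ne_of_lt hab
      norm_num [hne, hne.symm, ← mul_inv, h2]
    · rw [if_neg h,
        if_neg (show ¬(a = b' ∧ b = a') by
          rintro ⟨h1, h2⟩; rw [h1, h2] at hab; exact absurd hab (asymm hab')),
        if_neg (show ¬(b = a' ∧ a = b') by
          rintro ⟨h1, h2⟩; rw [h2, h1] at hab; exact absurd hab (asymm hab')),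
        if_neg (fun hh => h ⟨hh.2, hh.1⟩)]
      ring
  have e23 : ∀ (p : {p : Fin q × Fin q // p.1 < p.2}) (j : Fin (n - q)),
      Matrix.trace ((F (Sum.inr (Sum.inl p)))ᵀ * F (Sum.inr (Sum.inr j))) = 0 := by
    rintro ⟨⟨a, b⟩, hab⟩ j
    show Matrix.trace
      (((Real.sqrt 2)⁻¹ • (X * (Matrix.single a b 1 + Matrix.single b a 1)))ᵀ *
       vecMulVec (fun r => Xp r j) (((Real.sqrt (∑ k, v k ^ 2))⁻¹ • v) ᵥ* X)) = 0
    rw [transpose_smul, Matrix.smul_mul, trace_smul, hperp]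
    simp
  have e33 : ∀ i j : Fin (n - q),
      Matrix.trace ((F (Sum.inr (Sum.inr i)))ᵀ * F (Sum.inr (Sum.inr j))) =
        if i = j then 1 else 0 := by
    intro i j
    show Matrix.trace ((vecMulVec (fun r => Xp r i) (((Real.sqrt (∑ k, v k ^ 2))⁻¹ • v) ᵥ* X))ᵀ *
      vecMulVec (fun r => Xp r j) (((Real.sqrt (∑ k, v k ^ 2))⁻¹ • v) ᵥ* X)) = _
    rw [trace_vmv, ← hnvdef, hb, hbb, mul_one, hXptXp']
  have hmem : ∀ k : BasisIdx n q, F k ∈ {U : Matrix (Fin n) (Fin q) ℝ |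
      ∃ (S : Matrix (Fin q) (Fin q) ℝ) (u : Fin (n - q) → ℝ),
        Sᵀ = S ∧ U = X * S + vecMulVec (Xp *ᵥ u) c} := by
    rintro (i | ⟨⟨a, b⟩, hab⟩ | i)
    · refine ⟨Matrix.single i i 1, 0, transpose_std i i, ?_⟩
      show X * Matrix.single i i 1 =
        X * Matrix.single i i 1 + vecMulVec (Xp *ᵥ 0) c
      rw [mulVec_zero]
      ext r s
      simp [vecMulVec_apply]
    · refine ⟨(Real.sqrt 2)⁻¹ • (Matrix.single a b 1 + Matrix.single b a 1),
        0, ?_, ?_⟩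
      · rw [transpose_smul, transpose_add, transpose_std, transpose_std, add_comm]
      · show (Real.sqrt 2)⁻¹ • (X * (Matrix.single a b 1 + Matrix.single b a 1)) =
          X * ((Real.sqrt 2)⁻¹ • (Matrix.single a b 1 + Matrix.single b a 1)) +
          vecMulVec (Xp *ᵥ 0) c
        rw [mulVec_zero, Matrix.mul_smul]
        ext r s
        simp [vecMulVec_apply]
    · refine ⟨0, (nv⁻¹ • (Pi.single i (1:ℝ) : Fin (n - q) → ℝ)), by simp, ?_⟩
      show vecMulVec (fun r => Xp r i) ((nv⁻¹ • v) ᵥ* X) =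
        X * 0 + vecMulVec (Xp *ᵥ (nv⁻¹ • (Pi.single i (1:ℝ) : Fin (n - q) → ℝ))) c
      rw [Matrix.mul_zero, zero_add, hb]
      ext r s
      simp only [vecMulVec_apply, Pi.smul_apply, smul_eq_mul, mulVec, dotProduct,
        Pi.single_apply, mul_ite, mul_one, mul_zero, Finset.sum_ite_eq, Finset.sum_ite_eq',
        Finset.mem_univ, if_true]
      ring
  refine ⟨?_, hmem, ?_⟩
  · rintro (i | p | i) (j | p' | j)
    · rw [e11]; simp
    · rw [e12]; simp
    · rw [e13]; simp
    · rw [tsymm, e12]; simp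
    · rw [e22]; simp
    · rw [e23]; simp
    · rw [tsymm, e13]; simp
    · rw [tsymm, e23]; simp
    · rw [e33]; simp
  · -- span equals N
    set sp := Submodule.span ℝ (Set.range F) with hsp
    have hpair : ∀ i j : Fin q,
        X * (Matrix.single i j (1:ℝ) + Matrix.single j i (1:ℝ)) ∈ sp := by
      intro i j
      rcases lt_trichotomy i j with h | rfl | h
      · have hm : (Real.sqrt 2)⁻¹ •
            (X * (Matrix.single i j (1:ℝ) + Matrix.single j i (1:ℝ))) ∈ Set.range F :=
          ⟨Sum.inr (Sum.inl ⟨(i, j), h⟩), rfl⟩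
        have := Submodule.smul_mem sp (Real.sqrt 2) (Submodule.subset_span hm)
        rwa [smul_inv_smul₀ h2ne] at this
      · have hm : X * Matrix.single i i (1:ℝ) ∈ Set.range F := ⟨Sum.inl i, rfl⟩
        have heq : X * (Matrix.single i i (1:ℝ) + Matrix.single i i (1:ℝ)) =
            (2:ℝ) • (X * Matrix.single i i (1:ℝ)) := by
          rw [Matrix.mul_add, two_smul]
        rw [heq]
        exact Submodule.smul_mem sp _ (Submodule.subset_span hm)
      · have hm : (Real.sqrt 2)⁻¹ •
            (X * (Matrix.single j i (1:ℝ) + Matrix.single i j (1:ℝ))) ∈ Set.range F :=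
          ⟨Sum.inr (Sum.inl ⟨(j, i), h⟩), rfl⟩
        have h' := Submodule.smul_mem sp (Real.sqrt 2) (Submodule.subset_span hm)
        rw [smul_inv_smul₀ h2ne, add_comm] at h'
        exact h'
    have hXS : ∀ S : Matrix (Fin q) (Fin q) ℝ, Sᵀ = S → X * S ∈ sp := by
      intro S hS
      have hdecomp : X * S = (2:ℝ)⁻¹ • ∑ i, ∑ j, S i j •
          (X * (Matrix.single i j (1:ℝ) + Matrix.single j i (1:ℝ))) := by
        have h1 : ∑ i, ∑ j, S i j •
            (X * (Matrix.single i j (1:ℝ) + Matrix.single j i (1:ℝ))) =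
            X * ∑ i, ∑ j, S i j •
              (Matrix.single i j (1:ℝ) + Matrix.single j i (1:ℝ)) := by
          simp_rw [Matrix.mul_sum, Matrix.mul_smul]
        have h2' : ∑ i, ∑ j, S i j •
            (Matrix.single i j (1:ℝ) + Matrix.single j i (1:ℝ)) = S + Sᵀ := by
          simp_rw [smul_add, Finset.sum_add_distrib]
          congr 1
          · simp_rw [smul_single, smul_eq_mul, mul_one]
            exact (matrix_eq_sum_single S).symm
          · rw [Finset.sum_comm]
            simp_rw [smul_single, smul_eq_mul, mul_one]
            conv_rhs => rw [matrix_eq_sum_single Sᵀ]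
            exact Finset.sum_congr rfl fun i _ => Finset.sum_congr rfl fun j _ => rfl
        rw [h1, h2', hS, ← two_smul ℝ S, Matrix.mul_smul, smul_smul]
        norm_num
      rw [hdecomp]
      exact Submodule.smul_mem sp _ (Submodule.sum_mem sp fun i _ =>
        Submodule.sum_mem sp fun j _ => Submodule.smul_mem sp _ (hpair i j))
    have hVMV : ∀ u : Fin (n - q) → ℝ, vecMulVec (Xp *ᵥ u) c ∈ sp := by
      intro u
      have hrep : vecMulVec (Xp *ᵥ u) c = ∑ i, (nv * u i) • F (Sum.inr (Sum.inr i)) := by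
        ext r s
        have hFi : ∀ i : Fin (n - q), F (Sum.inr (Sum.inr i)) r s = Xp r i * (nv⁻¹ * c s) := by
          intro i
          show (vecMulVec (fun r => Xp r i) ((nv⁻¹ • v) ᵥ* X)) r s = _
          rw [hb, vecMulVec_apply]
          simp
        simp only [Matrix.sum_apply, Matrix.smul_apply, smul_eq_mul, hFi, vecMulVec_apply,
          mulVec, dotProduct]
        rw [Finset.sum_mul]
        refine Finset.sum_congr rfl fun i _ => ?_
        field_simp
      rw [hrep]
      exact Submodule.sum_mem sp fun i _ =>
        Submodule.smul_mem sp _ (Submodule.subset_span ⟨Sum.inr (Sum.inr i), rfl⟩)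
    let N' : Submodule ℝ (Matrix (Fin n) (Fin q) ℝ) :=
      { carrier := {U | ∃ (S : Matrix (Fin q) (Fin q) ℝ) (u : Fin (n - q) → ℝ),
          Sᵀ = S ∧ U = X * S + vecMulVec (Xp *ᵥ u) c}
        zero_mem' := ⟨0, 0, by simp, by
          rw [mulVec_zero, Matrix.mul_zero]
          ext r s
          simp [vecMulVec_apply]⟩
        add_mem' := by
          rintro A B ⟨S1, u1, h1, rfl⟩ ⟨S2, u2, h2, rfl⟩
          refine ⟨S1 + S2, u1 + u2, by rw [transpose_add, h1, h2], ?_⟩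
          rw [Matrix.mul_add, mulVec_add, vmv_add_left]
          abel
        smul_mem' := by
          rintro a A ⟨S1, u1, h1, rfl⟩
          refine ⟨a • S1, a • u1, by rw [transpose_smul, h1], ?_⟩
          rw [Matrix.mul_smul, mulVec_smul, vmv_smul_left, smul_add] }
    refine Set.Subset.antisymm ?_ ?_
    · have hle : sp ≤ N' := Submodule.span_le.2 (by
        rintro M ⟨k, rfl⟩
        exact hmem k)
      exact fun x hx => hle hx
    · rintro U ⟨S, u, hS, rfl⟩
      exact Submodule.add_mem sp (hXS S hS) (hVMV u)
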